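/- Let F be a field and θ : Fˣ → F a function with θ(1) = 0. Let n ≥ 1, 1 ≤ k ≤ n, a₁, …, aₙ, z₁, z₂, ħ ∈ Fˣ, and assume θ((z₁/z₂)·ħ^{k−2}) ≠ 0. Define S_k(t) := (∏_{i=1}^{k−1} θ(aᵢ/t)) · θ((t/a_k)·(z₁/z₂)·ħ^{k−1}) / θ((z₁/z₂)·ħ^{k−2}) · (∏_{i=k+1}^{n} θ((t/aᵢ)·ħ)) for t ∈ Fˣ. Then: (1) S_k(a_l·ħ⁻¹) = 0 for every l with k < l ≤ n; and (2) S_k(a_k·ħ⁻¹) = (∏_{i=1}^{k−1} θ((aᵢ/a_k)·ħ)) · (∏_{i=k+1}^{n} θ(a_k/aᵢ)). -/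
import Mathlib


/-- The explicit formula for the elliptic stable envelope `Stab_C(f_k)` of
`T*P^{n-1}` in its separated bow-variety presentation (standard chamber). -/
def Ssep {F : Type*} [Field F] (θ : Fˣ → F) (n k : ℕ) (a : ℕ → Fˣ) (z₁ z₂ hbar t : Fˣ) : F :=
  (∏ i ∈ Finset.Ico 1 k, θ (a i / t)) *
    θ (t / a k * (z₁ / z₂) * hbar ^ ((k : ℤ) - 1)) / θ (z₁ / z₂ * hbar ^ ((k : ℤ) - 2)) *
    ∏ i ∈ Finset.Ioc k n, θ (t / a i * hbar)

private lemma cancel_aux {G : Type*} [CommGroup G] (x y h : G) :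
    x * h⁻¹ / y * h = x / y := by
  rw [div_mul_eq_mul_div, mul_assoc, inv_mul_cancel, mul_one]

/-- Triangularity and diagonal restriction of the stable envelope formulas for
`T*P^{n-1}` (separated presentation): restriction to `f_l` is `t ↦ a_l·hbar⁻¹`. -/
theorem stmt13 {F : Type*} [Field F] (θ : Fˣ → F) (hθ : θ 1 = 0)
    (n k : ℕ) (hn : 1 ≤ n) (hk1 : 1 ≤ k) (hkn : k ≤ n)
    (a : ℕ → Fˣ) (z₁ z₂ hbar : Fˣ)
    (hden : θ (z₁ / z₂ * hbar ^ ((k : ℤ) - 2)) ≠ 0) :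
    (∀ l, k < l → l ≤ n → Ssep θ n k a z₁ z₂ hbar (a l * hbar⁻¹) = 0)
    ∧ Ssep θ n k a z₁ z₂ hbar (a k * hbar⁻¹)
        = (∏ i ∈ Finset.Ico 1 k, θ (a i / a k * hbar)) * ∏ i ∈ Finset.Ioc k n, θ (a k / a i) := by
  constructor
  · intro l hkl hln
    have hmem : l ∈ Finset.Ioc k n := Finset.mem_Ioc.mpr ⟨hkl, hln⟩
    have hz : θ (a l * hbar⁻¹ / a l * hbar) = 0 := by
      rw [cancel_aux, div_self', hθ]
    have : (∏ i ∈ Finset.Ioc k n, θ (a l * hbar⁻¹ / a i * hbar)) = 0 :=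
      Finset.prod_eq_zero hmem hz
    unfold Ssep
    rw [this, mul_zero]
  · unfold Ssep
    have h1 : a k * hbar⁻¹ / a k * (z₁ / z₂) * hbar ^ ((k : ℤ) - 1)
        = z₁ / z₂ * hbar ^ ((k : ℤ) - 2) := by
      have h2 : ((k : ℤ) - 1) = ((k : ℤ) - 2) + 1 := by ring
      rw [h2, zpow_add_one, mul_comm (hbar ^ ((k : ℤ) - 2)) hbar, ← mul_assoc,
        mul_right_comm,
        mul_right_comm (a k * hbar⁻¹ / a k * (z₁ / z₂)) (hbar ^ ((k : ℤ) - 2)) hbar,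
        mul_right_comm (a k * hbar⁻¹ / a k) (z₁ / z₂) hbar,
        cancel_aux, div_self', one_mul]
    rw [h1, mul_div_assoc, div_self hden, mul_one]
    congr 1
    · exact Finset.prod_congr rfl fun i _ => by
        rw [div_mul_eq_div_div, div_eq_mul_inv (a i / a k), inv_inv]
    · exact Finset.prod_congr rfl fun i _ => by
        rw [cancel_aux]
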